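/- With the Moyal product ⋆ on A = MvPolynomial (Fin (2n)) (Polynomial ℂ) defined by the standard symplectic matrix ω̂, the pair (A, ⋆) is an associative unital algebra over ℂ[ℏ]: for all f, g, h ∈ A one has (f ⋆ g) ⋆ h = f ⋆ (g ⋆ h), and 1 ⋆ f = f ⋆ 1 = f; moreover ⋆ is ℂ[ℏ]-bilinear. (This is the polynomial Weyl algebra W^{pol}_{2n}.) -/

import Mathlib

noncomputable section

/-- The polynomial Weyl algebra carrier: polynomials in `y₀, …, y_{2n−1}` with
coefficients in `ℂ[ℏ]` (where `ℏ = Polynomial.X`). -/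
abbrev WeylPoly (n : ℕ) := MvPolynomial (Fin (2*n)) (Polynomial ℂ)

/-- The standard symplectic matrix `ω̂`: `ω̂(i,j) = 1` if `j = i + n`, `−1` if
`i = j + n`, and `0` otherwise. -/
def omegaHat (n : ℕ) (i j : Fin (2*n)) : ℂ :=
  if (j : ℕ) = (i : ℕ) + n then 1 else if (i : ℕ) = (j : ℕ) + n then -1 else 0

/-- Iterated partial derivative `∂_{v 0} ⋯ ∂_{v (m−1)}`. -/
def multiDeriv {n m : ℕ} (v : Fin m → Fin (2*n)) (f : WeylPoly n) : WeylPoly n :=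
  (List.ofFn v).foldr (fun i g => MvPolynomial.pderiv i g) f

/-- The Moyal product
`f ⋆ g = ∑_{m} (ℏ^m / (2^m m!)) ∑_{i₁,…,i_m} ∑_{j₁,…,j_m} (∏_s ω̂(i_s, j_s)) ·
(∂_{i₁} ⋯ ∂_{i_m} f) · (∂_{j₁} ⋯ ∂_{j_m} g)`; the sum over `m` is truncated at
`totalDegree f`, beyond which all terms vanish. -/
def moyal (n : ℕ) (f g : WeylPoly n) : WeylPoly n :=
  ∑ m ∈ Finset.range (f.totalDegree + 1),
    MvPolynomial.C (Polynomial.C (1 / ((2:ℂ)^m * (Nat.factorial m : ℂ))) * Polynomial.X ^ m) *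
      ∑ v : Fin m → Fin (2*n), ∑ w : Fin m → Fin (2*n),
        MvPolynomial.C (Polynomial.C (∏ s : Fin m, omegaHat n (v s) (w s))) *
          (multiDeriv v f * multiDeriv w g)

open MvPolynomial Finset

namespace MoyalAux

variable {n : ℕ}

/-- foldr version of iterated pderiv. -/
def pl (L : List (Fin (2*n))) (f : WeylPoly n) : WeylPoly n :=
  L.foldr (fun i g => MvPolynomial.pderiv i g) f

lemma multiDeriv_eq_pl {m : ℕ} (v : Fin m → Fin (2*n)) (f : WeylPoly n) :
    multiDeriv v f = pl (List.ofFn v) f := rfl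

@[simp] lemma pl_nil (f : WeylPoly n) : pl ([] : List (Fin (2*n))) f = f := rfl

@[simp] lemma pl_cons (j : Fin (2*n)) (L : List (Fin (2*n))) (f : WeylPoly n) :
    pl (j :: L) f = pderiv j (pl L f) := rfl

lemma pl_append (L L' : List (Fin (2*n))) (f : WeylPoly n) :
    pl (L ++ L') f = pl L (pl L' f) := by
  simp [pl, List.foldr_append]

@[simp] lemma pl_zero (L : List (Fin (2*n))) : pl L (0 : WeylPoly n) = 0 := by
  induction L with
  | nil => rfl
  | cons j L ih => simp [ih]

lemma pl_add (L : List (Fin (2*n))) (f g : WeylPoly n) :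
    pl L (f + g) = pl L f + pl L g := by
  induction L with
  | nil => rfl
  | cons j L ih => simp [ih]

lemma pl_smul (L : List (Fin (2*n))) (c : Polynomial ℂ) (f : WeylPoly n) :
    pl L (c • f) = c • pl L f := by
  induction L with
  | nil => rfl
  | cons j L ih => simp [ih]

lemma pl_sum {α : Type*} (s : Finset α) (L : List (Fin (2*n))) (F : α → WeylPoly n) :
    pl L (∑ x ∈ s, F x) = ∑ x ∈ s, pl L (F x) := by
  induction L with
  | nil => rfl
  | cons j L ih => simp [ih, map_sum]

lemma pderiv_pderiv_comm (i j : Fin (2*n)) (f : WeylPoly n) :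
    pderiv i (pderiv j f) = pderiv j (pderiv i f) := by
  induction f using MvPolynomial.induction_on with
  | C a => simp [pderiv_C]
  | add p q hp hq => simp [hp, hq]
  | mul_X p k ih =>
      rcases eq_or_ne k i with rfl | hi <;> rcases eq_or_ne k j with rfl | hj <;>
        simp [pderiv_mul, ih, pderiv_X_self, pderiv_X_of_ne, *] <;> ring

lemma pl_pderiv (L : List (Fin (2*n))) (j : Fin (2*n)) (f : WeylPoly n) :
    pl L (pderiv j f) = pderiv j (pl L f) := by
  induction L with
  | nil => rfl
  | cons i L ih => simp [ih, pderiv_pderiv_comm]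

lemma sum_sub_single {k : Fin (2*n) →₀ ℕ} {j : Fin (2*n)} (h : k j ≠ 0) :
    (∑ i : Fin (2*n), (k - Finsupp.single j 1 : Fin (2*n) →₀ ℕ) i) + 1 = ∑ i, k i := by
  have h1 : ∀ i, (k - Finsupp.single j 1 : Fin (2*n) →₀ ℕ) i = k i - (Finsupp.single j 1) i :=
    fun i => Finsupp.tsub_apply _ _ _
  have h2 : ∑ i, (Finsupp.single j 1 : Fin (2*n) →₀ ℕ) i = 1 := by
    simp [Finsupp.single_apply]
  calc (∑ i : Fin (2*n), (k - Finsupp.single j 1 : Fin (2*n) →₀ ℕ) i) + 1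
      = (∑ i : Fin (2*n), (k i - (Finsupp.single j 1) i)) + ∑ i, (Finsupp.single j 1 : Fin (2*n) →₀ ℕ) i := by
        rw [h2]; simp [h1]
    _ = ∑ i : Fin (2*n), ((k i - (Finsupp.single j 1) i) + (Finsupp.single j 1) i) := by
        rw [Finset.sum_add_distrib]
    _ = ∑ i, k i := by
        refine Finset.sum_congr rfl fun i _ => ?_
        have : (Finsupp.single j 1 : Fin (2*n) →₀ ℕ) i ≤ k i := by
          rcases eq_or_ne i j with rfl | hne
          · simpa [Finsupp.single_apply] using Nat.one_le_iff_ne_zero.mpr h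
          · simp [Finsupp.single_apply, Ne.symm hne]
        omega

lemma pl_monomial_eq_zero (L : List (Fin (2*n))) (k : Fin (2*n) →₀ ℕ) (a : Polynomial ℂ)
    (h : ∑ i, k i < L.length) : pl L (monomial k a) = 0 := by
  induction L using List.reverseRecOn generalizing k a with
  | nil => simp at h
  | append_singleton L j ih =>
      rw [pl_append, pl_cons, pl_nil, pderiv_monomial]
      rcases eq_or_ne (k j) 0 with hj | hj
      · simp [hj]
      · apply ih
        have := sum_sub_single (k := k) (j := j) hj
        simp only [List.length_append, List.length_singleton] at h
        omega

lemma totalDegree_lt_imp_pl_zero (L : List (Fin (2*n))) (f : WeylPoly n)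
    (h : f.totalDegree < L.length) : pl L f = 0 := by
  conv_lhs => rw [f.as_sum]
  rw [pl_sum]
  refine Finset.sum_eq_zero fun k hk => ?_
  refine pl_monomial_eq_zero _ _ _ ?_
  have h1 : (k.sum fun _ e => e) ≤ f.totalDegree := le_totalDegree hk
  have h2 : (k.sum fun _ e => e) = ∑ i, k i := Finsupp.sum_fintype _ _ (fun _ => rfl)
  omega

lemma multiDeriv_eq_zero {m : ℕ} (v : Fin m → Fin (2*n)) (f : WeylPoly n)
    (h : f.totalDegree < m) : multiDeriv v f = 0 := by
  rw [multiDeriv_eq_pl]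
  exact totalDegree_lt_imp_pl_zero _ _ (by simpa using h)

def mterm (n : ℕ) (m : ℕ) (f g : WeylPoly n) : WeylPoly n :=
  MvPolynomial.C (Polynomial.C (1 / ((2:ℂ)^m * (Nat.factorial m : ℂ))) * Polynomial.X ^ m) *
    ∑ v : Fin m → Fin (2*n), ∑ w : Fin m → Fin (2*n),
      MvPolynomial.C (Polynomial.C (∏ s : Fin m, omegaHat n (v s) (w s))) *
        (multiDeriv v f * multiDeriv w g)

lemma moyal_def (f g : WeylPoly n) :
    moyal n f g = ∑ m ∈ Finset.range (f.totalDegree + 1), mterm n m f g := rfl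

lemma multiDeriv_add {m : ℕ} (v : Fin m → Fin (2*n)) (f g : WeylPoly n) :
    multiDeriv v (f + g) = multiDeriv v f + multiDeriv v g := pl_add _ _ _

lemma multiDeriv_smul {m : ℕ} (v : Fin m → Fin (2*n)) (c : Polynomial ℂ) (f : WeylPoly n) :
    multiDeriv v (c • f) = c • multiDeriv v f := pl_smul _ _ _

@[simp] lemma multiDeriv_zero {m : ℕ} (v : Fin m → Fin (2*n)) :
    multiDeriv v (0 : WeylPoly n) = 0 := pl_zero _

lemma multiDeriv_pderiv {m : ℕ} (v : Fin m → Fin (2*n)) (j : Fin (2*n)) (f : WeylPoly n) :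
    multiDeriv v (pderiv j f) = pderiv j (multiDeriv v f) := pl_pderiv _ _ _

lemma mterm_eq_zero_left {m : ℕ} {f : WeylPoly n} (h : f.totalDegree < m) (g : WeylPoly n) :
    mterm n m f g = 0 := by
  simp [mterm, multiDeriv_eq_zero _ _ h]

lemma mterm_eq_zero_right {m : ℕ} (f : WeylPoly n) {g : WeylPoly n} (h : g.totalDegree < m) :
    mterm n m f g = 0 := by
  simp [mterm, multiDeriv_eq_zero _ _ h]

lemma moyal_eq (N : ℕ) {f : WeylPoly n} (h : f.totalDegree ≤ N) (g : WeylPoly n) :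
    moyal n f g = ∑ m ∈ Finset.range (N + 1), mterm n m f g := by
  rw [moyal_def]
  apply Finset.sum_subset (Finset.range_subset_range.2 (Nat.succ_le_succ h))
  intro m hm hm'
  refine mterm_eq_zero_left ?_ _
  simp only [Finset.mem_range] at hm'
  omega

lemma mterm_add_left (m : ℕ) (f f' g : WeylPoly n) :
    mterm n m (f + f') g = mterm n m f g + mterm n m f' g := by
  simp [mterm, multiDeriv_add, add_mul, mul_add, Finset.sum_add_distrib]

lemma mterm_add_right (m : ℕ) (f g g' : WeylPoly n) :
    mterm n m f (g + g') = mterm n m f g + mterm n m f g' := by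
  simp [mterm, multiDeriv_add, add_mul, mul_add, Finset.sum_add_distrib]

lemma mterm_smul_left (m : ℕ) (c : Polynomial ℂ) (f g : WeylPoly n) :
    mterm n m (c • f) g = c • mterm n m f g := by
  unfold mterm
  rw [← mul_smul_comm, Finset.smul_sum]
  refine congrArg _ (Finset.sum_congr rfl fun v _ => ?_)
  rw [Finset.smul_sum]
  refine Finset.sum_congr rfl fun w _ => ?_
  rw [multiDeriv_smul, smul_mul_assoc, mul_smul_comm]

lemma mterm_smul_right (m : ℕ) (c : Polynomial ℂ) (f g : WeylPoly n) :
    mterm n m f (c • g) = c • mterm n m f g := by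
  unfold mterm
  rw [← mul_smul_comm, Finset.smul_sum]
  refine congrArg _ (Finset.sum_congr rfl fun v _ => ?_)
  rw [Finset.smul_sum]
  refine Finset.sum_congr rfl fun w _ => ?_
  rw [multiDeriv_smul, mul_smul_comm, mul_smul_comm]

lemma moyal_add_right (f g g' : WeylPoly n) :
    moyal n f (g + g') = moyal n f g + moyal n f g' := by
  simp [moyal_def, mterm_add_right, Finset.sum_add_distrib]

lemma moyal_smul_right (c : Polynomial ℂ) (f g : WeylPoly n) :
    moyal n f (c • g) = c • moyal n f g := by
  simp [moyal_def, mterm_smul_right, Finset.smul_sum]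

@[simp] lemma moyal_zero_right (f : WeylPoly n) : moyal n f 0 = 0 := by
  simp [moyal_def, mterm]

lemma moyal_sum_right {α : Type*} (s : Finset α) (f : WeylPoly n) (G : α → WeylPoly n) :
    moyal n f (∑ x ∈ s, G x) = ∑ x ∈ s, moyal n f (G x) := by
  induction s using Finset.cons_induction with
  | empty => simp
  | cons a s ha ih => simp [Finset.sum_cons, moyal_add_right, ih]

lemma moyal_add_left (f f' g : WeylPoly n) :
    moyal n (f + f') g = moyal n f g + moyal n f' g := by
  set N := max f.totalDegree f'.totalDegree with hN
  rw [moyal_eq N (le_max_left _ _), moyal_eq N (le_max_right _ _),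
    moyal_eq N ((totalDegree_add f f').trans le_rfl), ← Finset.sum_add_distrib]
  exact Finset.sum_congr rfl fun m _ => mterm_add_left m f f' g

lemma moyal_smul_left (c : Polynomial ℂ) (f g : WeylPoly n) :
    moyal n (c • f) g = c • moyal n f g := by
  have hd : (c • f).totalDegree ≤ f.totalDegree := by
    rw [smul_eq_C_mul]
    exact (totalDegree_mul _ _).trans (by simp)
  rw [moyal_eq f.totalDegree hd, moyal_eq f.totalDegree le_rfl, Finset.smul_sum]
  exact Finset.sum_congr rfl fun m _ => mterm_smul_left m c f g

@[simp] lemma moyal_zero_left (g : WeylPoly n) : moyal n 0 g = 0 := by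
  have := moyal_smul_left (n := n) 0 0 g
  simpa using this

lemma moyal_sum_left {α : Type*} (s : Finset α) (G : α → WeylPoly n) (g : WeylPoly n) :
    moyal n (∑ x ∈ s, G x) g = ∑ x ∈ s, moyal n (G x) g := by
  induction s using Finset.cons_induction with
  | empty => simp
  | cons a s ha ih => simp [Finset.sum_cons, moyal_add_left, ih]

lemma totalDegree_pderiv_le (j : Fin (2*n)) (g : WeylPoly n) :
    (pderiv j g).totalDegree ≤ g.totalDegree := by
  conv_lhs => rw [g.as_sum, map_sum]
  refine (totalDegree_finset_sum _ _).trans (Finset.sup_le fun k hk => ?_)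
  rw [pderiv_monomial]
  refine (totalDegree_monomial_le _ _).trans ?_
  refine le_trans ?_ (le_totalDegree hk)
  rw [Finsupp.sum_fintype _ _ (fun _ => rfl), Finsupp.sum_fintype _ _ (fun _ => rfl)]
  exact Finset.sum_le_sum fun i _ => by simp [Finsupp.tsub_apply]

@[simp] lemma multiDeriv_zero_fun (v : Fin 0 → Fin (2*n)) (f : WeylPoly n) :
    multiDeriv v f = f := by
  simp [multiDeriv, List.ofFn_zero]

lemma mterm_zero (f g : WeylPoly n) : mterm n 0 f g = f * g := by
  simp [mterm, Finset.univ_unique, Finset.sum_singleton]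

lemma moyal_C_left (a : Polynomial ℂ) (g : WeylPoly n) :
    moyal n (MvPolynomial.C a) g = MvPolynomial.C a * g := by
  rw [moyal_def, totalDegree_C, Finset.range_one, Finset.sum_singleton, mterm_zero]

lemma moyal_C_right (f : WeylPoly n) (a : Polynomial ℂ) :
    moyal n f (MvPolynomial.C a) = MvPolynomial.C a * f := by
  rw [moyal_def, Finset.sum_eq_single_of_mem 0 (Finset.mem_range.2 (Nat.succ_pos _))
    (fun m _ hm => mterm_eq_zero_right _ (by rw [totalDegree_C]; omega)),
    mterm_zero, mul_comm]
lemma multiDeriv_succ {m : ℕ} (v : Fin (m+1) → Fin (2*n)) (f : WeylPoly n) :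
    multiDeriv v f = pderiv (v 0) (multiDeriv (v ∘ Fin.succ) f) := by
  simp [multiDeriv, List.ofFn_succ, Function.comp_def]

lemma multiDeriv_extract : ∀ {m : ℕ} (s : Fin (m+1)) (w : Fin (m+1) → Fin (2*n))
    (g : WeylPoly n), multiDeriv w g = pderiv (w s) (multiDeriv (w ∘ s.succAbove) g) := by
  intro m
  induction m with
  | zero =>
      intro s w g
      have hs : s = 0 := by
        apply Fin.ext
        have := s.isLt
        omega
      subst hs
      rw [Fin.succAbove_zero, multiDeriv_succ]
  | succ m ih =>
      intro s w g
      induction s using Fin.cases with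
      | zero => rw [Fin.succAbove_zero, multiDeriv_succ]
      | succ t =>
          rw [multiDeriv_succ, ih t (w ∘ Fin.succ) g, pderiv_pderiv_comm]
          congr 1
          rw [multiDeriv_succ (w ∘ (Fin.succAbove t.succ))]
          congr 1
          · congr 1
            funext x
            simp [Function.comp, Fin.succ_succAbove_succ]

lemma multiDeriv_X_mul : ∀ {m : ℕ} (v : Fin (m+1) → Fin (2*n)) (i : Fin (2*n))
    (f : WeylPoly n),
    multiDeriv v (X i * f) = X i * multiDeriv v f +
      ∑ s : Fin (m+1), if v s = i then multiDeriv (v ∘ s.succAbove) f else 0 := by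
  intro m
  induction m with
  | zero =>
      intro v i f
      rw [multiDeriv_succ v (X i * f), multiDeriv_succ v f, Fin.sum_univ_one]
      simp only [multiDeriv_zero_fun]
      rw [pderiv_mul]
      rcases eq_or_ne (v 0) i with h | h
      · rw [if_pos h, h, pderiv_X_self, one_mul, add_comm]
      · rw [if_neg h, pderiv_X_of_ne (Ne.symm h), zero_mul, zero_add, add_zero]
  | succ m ih =>
      intro v i f
      rw [multiDeriv_succ v (X i * f), ih (v ∘ Fin.succ) i f, map_add, pderiv_mul, map_sum]
      have hs : ∀ s : Fin (m+1),
          pderiv (v 0) (if (v ∘ Fin.succ) s = i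
              then multiDeriv ((v ∘ Fin.succ) ∘ s.succAbove) f else 0)
          = (if v s.succ = i then multiDeriv (v ∘ s.succ.succAbove) f else 0) := by
        intro s
        rcases eq_or_ne (v s.succ) i with h | h
        · rw [if_pos (show (v ∘ Fin.succ) s = i from h), if_pos h]
          rw [multiDeriv_succ (v ∘ (Fin.succAbove s.succ))]
          congr 1
          · congr 1
            funext x
            simp [Function.comp, Fin.succ_succAbove_succ]
        · rw [if_neg (show ¬ (v ∘ Fin.succ) s = i from h), if_neg h, map_zero]
      rw [Finset.sum_congr rfl (fun s _ => hs s)]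
      have h0 : (if v 0 = i then multiDeriv (v ∘ Fin.succAbove 0) f else 0)
          = pderiv (v 0) (X i) * multiDeriv (v ∘ Fin.succ) f := by
        rcases eq_or_ne (v 0) i with h | h
        · rw [if_pos h, h, pderiv_X_self, one_mul, Fin.succAbove_zero]
        · rw [if_neg h, pderiv_X_of_ne (Ne.symm h), zero_mul]
      have hsplit : ∑ s : Fin (m+1+1), (if v s = i then multiDeriv (v ∘ s.succAbove) f else 0)
          = (if v 0 = i then multiDeriv (v ∘ Fin.succAbove 0) f else 0)
            + ∑ s : Fin (m+1), (if v s.succ = i then multiDeriv (v ∘ s.succ.succAbove) f else 0) :=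
        Fin.sum_univ_succ _
      rw [hsplit, h0, multiDeriv_succ v f]
      ring
/-- The indexed summand used in the key reindexing step. -/
def Hfun (i : Fin (2*n)) (f g : WeylPoly n) (m : ℕ)
    (x y : Fin (2*n) × (Fin m → Fin (2*n))) : WeylPoly n :=
  MvPolynomial.C (Polynomial.C (omegaHat n x.1 y.1)) *
    (MvPolynomial.C (Polynomial.C (∏ t : Fin m, omegaHat n (x.2 t) (y.2 t))) *
      ((if x.1 = i then multiDeriv x.2 f else 0) * pderiv y.1 (multiDeriv y.2 g)))

lemma key_reindex (m : ℕ) (i : Fin (2*n)) (f g : WeylPoly n) (s : Fin (m+1)) :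
    (∑ v : Fin (m+1) → Fin (2*n), ∑ w : Fin (m+1) → Fin (2*n),
      MvPolynomial.C (Polynomial.C (∏ t : Fin (m+1), omegaHat n (v t) (w t))) *
        ((if v s = i then multiDeriv (v ∘ s.succAbove) f else 0) * multiDeriv w g))
    = ∑ j : Fin (2*n), MvPolynomial.C (Polynomial.C (omegaHat n i j)) *
        (∑ v' : Fin m → Fin (2*n), ∑ w' : Fin m → Fin (2*n),
          MvPolynomial.C (Polynomial.C (∏ t : Fin m, omegaHat n (v' t) (w' t))) *
            (multiDeriv v' f * multiDeriv w' (pderiv j g))) := by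
  have hrw : ∀ v w : Fin (m+1) → Fin (2*n),
      MvPolynomial.C (Polynomial.C (∏ t : Fin (m+1), omegaHat n (v t) (w t))) *
        ((if v s = i then multiDeriv (v ∘ s.succAbove) f else 0) * multiDeriv w g)
      = Hfun i f g m (v s, v ∘ s.succAbove) (w s, w ∘ s.succAbove) := by
    intro v w
    rw [Fin.prod_univ_succAbove (fun t => omegaHat n (v t) (w t)) s,
      multiDeriv_extract s w g]
    unfold Hfun
    rw [map_mul, map_mul]
    simp only [Function.comp_apply]
    ring
  have step1 : (∑ v : Fin (m+1) → Fin (2*n), ∑ w : Fin (m+1) → Fin (2*n),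
      MvPolynomial.C (Polynomial.C (∏ t : Fin (m+1), omegaHat n (v t) (w t))) *
        ((if v s = i then multiDeriv (v ∘ s.succAbove) f else 0) * multiDeriv w g))
      = ∑ x : Fin (2*n) × (Fin m → Fin (2*n)), ∑ y : Fin (2*n) × (Fin m → Fin (2*n)),
          Hfun i f g m x y := by
    refine Fintype.sum_equiv (Fin.insertNthEquiv (fun _ => Fin (2*n)) s).symm _ _ fun v => ?_
    refine Fintype.sum_equiv (Fin.insertNthEquiv (fun _ => Fin (2*n)) s).symm _ _ fun w => ?_
    exact hrw v w
  rw [step1, Fintype.sum_prod_type]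
  rw [Finset.sum_eq_single_of_mem i (Finset.mem_univ i) (fun b _ hb => by
    apply Finset.sum_eq_zero
    intro v' _
    apply Finset.sum_eq_zero
    intro y _
    simp [Hfun, hb])]
  calc (∑ v' : Fin m → Fin (2*n), ∑ y : Fin (2*n) × (Fin m → Fin (2*n)),
          Hfun i f g m (i, v') y)
      = ∑ v' : Fin m → Fin (2*n), ∑ b : Fin (2*n), ∑ w' : Fin m → Fin (2*n),
          Hfun i f g m (i, v') (b, w') :=
        Finset.sum_congr rfl fun v' _ => Fintype.sum_prod_type _
    _ = ∑ b : Fin (2*n), ∑ v' : Fin m → Fin (2*n), ∑ w' : Fin m → Fin (2*n),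
          Hfun i f g m (i, v') (b, w') := Finset.sum_comm
    _ = ∑ j : Fin (2*n), MvPolynomial.C (Polynomial.C (omegaHat n i j)) *
        (∑ v' : Fin m → Fin (2*n), ∑ w' : Fin m → Fin (2*n),
          MvPolynomial.C (Polynomial.C (∏ t : Fin m, omegaHat n (v' t) (w' t))) *
            (multiDeriv v' f * multiDeriv w' (pderiv j g))) := by
        refine Finset.sum_congr rfl fun b _ => ?_
        rw [Finset.mul_sum]
        refine Finset.sum_congr rfl fun v' _ => ?_
        rw [Finset.mul_sum]
        refine Finset.sum_congr rfl fun w' _ => ?_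
        unfold Hfun
        rw [if_pos rfl, multiDeriv_pderiv]

lemma mterm_succ_X_mul (m : ℕ) (i : Fin (2*n)) (f g : WeylPoly n) :
    mterm n (m+1) (X i * f) g
      = X i * mterm n (m+1) f g
        + MvPolynomial.C (Polynomial.C (1/2 : ℂ) * Polynomial.X) *
            ∑ j : Fin (2*n), MvPolynomial.C (Polynomial.C (omegaHat n i j)) *
              mterm n m f (pderiv j g) := by
  have expand : ∀ v w : Fin (m+1) → Fin (2*n),
      MvPolynomial.C (Polynomial.C (∏ t : Fin (m+1), omegaHat n (v t) (w t))) *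
        (multiDeriv v (X i * f) * multiDeriv w g)
      = X i * (MvPolynomial.C (Polynomial.C (∏ t : Fin (m+1), omegaHat n (v t) (w t))) *
          (multiDeriv v f * multiDeriv w g))
        + ∑ s : Fin (m+1), MvPolynomial.C (Polynomial.C (∏ t : Fin (m+1), omegaHat n (v t) (w t))) *
            ((if v s = i then multiDeriv (v ∘ s.succAbove) f else 0) * multiDeriv w g) := by
    intro v w
    rw [multiDeriv_X_mul, add_mul, Finset.sum_mul, mul_add, Finset.mul_sum]
    ring
  have hsum : (∑ v : Fin (m+1) → Fin (2*n), ∑ w : Fin (m+1) → Fin (2*n),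
      MvPolynomial.C (Polynomial.C (∏ t : Fin (m+1), omegaHat n (v t) (w t))) *
        (multiDeriv v (X i * f) * multiDeriv w g))
      = X i * (∑ v : Fin (m+1) → Fin (2*n), ∑ w : Fin (m+1) → Fin (2*n),
          MvPolynomial.C (Polynomial.C (∏ t : Fin (m+1), omegaHat n (v t) (w t))) *
            (multiDeriv v f * multiDeriv w g))
        + ∑ s : Fin (m+1), ∑ v : Fin (m+1) → Fin (2*n), ∑ w : Fin (m+1) → Fin (2*n),
            MvPolynomial.C (Polynomial.C (∏ t : Fin (m+1), omegaHat n (v t) (w t))) *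
              ((if v s = i then multiDeriv (v ∘ s.succAbove) f else 0) * multiDeriv w g) := by
    have swap : ∀ (F : (Fin (m+1) → Fin (2*n)) → (Fin (m+1) → Fin (2*n)) → Fin (m+1) → WeylPoly n),
        (∑ v : Fin (m+1) → Fin (2*n), ∑ w : Fin (m+1) → Fin (2*n), ∑ s : Fin (m+1), F v w s)
        = ∑ s : Fin (m+1), ∑ v : Fin (m+1) → Fin (2*n), ∑ w : Fin (m+1) → Fin (2*n), F v w s := by
      intro F
      calc (∑ v : Fin (m+1) → Fin (2*n), ∑ w : Fin (m+1) → Fin (2*n), ∑ s : Fin (m+1), F v w s)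
          = ∑ v : Fin (m+1) → Fin (2*n), ∑ s : Fin (m+1), ∑ w : Fin (m+1) → Fin (2*n), F v w s :=
            Finset.sum_congr rfl fun v _ => Finset.sum_comm
        _ = ∑ s : Fin (m+1), ∑ v : Fin (m+1) → Fin (2*n), ∑ w : Fin (m+1) → Fin (2*n), F v w s :=
            Finset.sum_comm
    rw [Finset.sum_congr rfl (fun v _ => Finset.sum_congr rfl (fun w _ => expand v w))]
    rw [Finset.sum_congr rfl (fun v (_ : v ∈ Finset.univ) => Finset.sum_add_distrib)]
    rw [Finset.sum_add_distrib]
    congr 1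
    · rw [Finset.mul_sum]
      exact Finset.sum_congr rfl fun v _ => (Finset.mul_sum _ _ _).symm
    · exact swap _
  have hsc : ((m+1 : ℕ) : ℂ) * (1 / ((2:ℂ)^(m+1) * ((m+1).factorial : ℂ)))
      = (1/2 : ℂ) * (1 / ((2:ℂ)^m * (m.factorial : ℂ))) := by
    have h2 : (2:ℂ)^m ≠ 0 := pow_ne_zero _ two_ne_zero
    have hf : ((m.factorial : ℂ)) ≠ 0 := Nat.cast_ne_zero.2 m.factorial_ne_zero
    have hf1 : (((m+1).factorial : ℂ)) ≠ 0 := Nat.cast_ne_zero.2 (m+1).factorial_ne_zero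
    field_simp
    push_cast [Nat.factorial_succ]
    ring
  have hc : ((m+1 : ℕ) : WeylPoly n) *
        MvPolynomial.C (Polynomial.C (1 / ((2:ℂ)^(m+1) * ((m+1).factorial : ℂ))) * Polynomial.X ^ (m+1))
      = MvPolynomial.C (Polynomial.C (1/2 : ℂ) * Polynomial.X) *
        MvPolynomial.C (Polynomial.C (1 / ((2:ℂ)^m * (m.factorial : ℂ))) * Polynomial.X ^ m) := by
    rw [← map_natCast (MvPolynomial.C : Polynomial ℂ →+* WeylPoly n) (m+1), ← map_mul, ← map_mul]
    congr 1
    rw [← Polynomial.C_eq_natCast]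
    calc (Polynomial.C ((m+1 : ℕ) : ℂ)) *
          (Polynomial.C (1 / ((2:ℂ)^(m+1) * ((m+1).factorial : ℂ))) * Polynomial.X ^ (m+1))
        = Polynomial.C (((m+1 : ℕ) : ℂ) * (1 / ((2:ℂ)^(m+1) * ((m+1).factorial : ℂ)))) *
            Polynomial.X ^ (m+1) := by rw [Polynomial.C_mul]; ring
      _ = Polynomial.C ((1/2 : ℂ) * (1 / ((2:ℂ)^m * (m.factorial : ℂ)))) * Polynomial.X ^ (m+1) := by
            rw [hsc]
      _ = (Polynomial.C (1/2 : ℂ) * Polynomial.X) *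
            (Polynomial.C (1 / ((2:ℂ)^m * (m.factorial : ℂ))) * Polynomial.X ^ m) := by
            rw [Polynomial.C_mul, pow_succ]; ring
  unfold mterm
  rw [hsum]
  rw [Finset.sum_congr rfl (fun s (_ : s ∈ Finset.univ) => key_reindex m i f g s)]
  rw [Finset.sum_const, Finset.card_univ, Fintype.card_fin, nsmul_eq_mul]
  have hcollapse : ∑ j : Fin (2*n), MvPolynomial.C (Polynomial.C (omegaHat n i j)) *
      (MvPolynomial.C (Polynomial.C (1 / ((2:ℂ)^m * (m.factorial : ℂ))) * Polynomial.X ^ m) *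
        ∑ v' : Fin m → Fin (2*n), ∑ w' : Fin m → Fin (2*n),
          MvPolynomial.C (Polynomial.C (∏ t : Fin m, omegaHat n (v' t) (w' t))) *
            (multiDeriv v' f * multiDeriv w' (pderiv j g)))
      = MvPolynomial.C (Polynomial.C (1 / ((2:ℂ)^m * (m.factorial : ℂ))) * Polynomial.X ^ m) *
        ∑ j : Fin (2*n), MvPolynomial.C (Polynomial.C (omegaHat n i j)) *
          (∑ v' : Fin m → Fin (2*n), ∑ w' : Fin m → Fin (2*n),
            MvPolynomial.C (Polynomial.C (∏ t : Fin m, omegaHat n (v' t) (w' t))) *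
              (multiDeriv v' f * multiDeriv w' (pderiv j g))) := by
    rw [Finset.mul_sum]
    exact Finset.sum_congr rfl fun j _ => by ring
  rw [hcollapse]
  calc MvPolynomial.C (Polynomial.C (1 / ((2:ℂ)^(m+1) * ((m+1).factorial : ℂ))) * Polynomial.X ^ (m+1)) *
        (X i * (∑ v : Fin (m+1) → Fin (2*n), ∑ w : Fin (m+1) → Fin (2*n),
          MvPolynomial.C (Polynomial.C (∏ t : Fin (m+1), omegaHat n (v t) (w t))) *
            (multiDeriv v f * multiDeriv w g))
        + ((m+1 : ℕ) : WeylPoly n) * ∑ j : Fin (2*n), MvPolynomial.C (Polynomial.C (omegaHat n i j)) *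
            (∑ v' : Fin m → Fin (2*n), ∑ w' : Fin m → Fin (2*n),
              MvPolynomial.C (Polynomial.C (∏ t : Fin m, omegaHat n (v' t) (w' t))) *
                (multiDeriv v' f * multiDeriv w' (pderiv j g))))
      = X i * (MvPolynomial.C (Polynomial.C (1 / ((2:ℂ)^(m+1) * ((m+1).factorial : ℂ))) * Polynomial.X ^ (m+1)) *
          ∑ v : Fin (m+1) → Fin (2*n), ∑ w : Fin (m+1) → Fin (2*n),
            MvPolynomial.C (Polynomial.C (∏ t : Fin (m+1), omegaHat n (v t) (w t))) *
              (multiDeriv v f * multiDeriv w g))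
        + (((m+1 : ℕ) : WeylPoly n) *
            MvPolynomial.C (Polynomial.C (1 / ((2:ℂ)^(m+1) * ((m+1).factorial : ℂ))) * Polynomial.X ^ (m+1))) *
          ∑ j : Fin (2*n), MvPolynomial.C (Polynomial.C (omegaHat n i j)) *
            (∑ v' : Fin m → Fin (2*n), ∑ w' : Fin m → Fin (2*n),
              MvPolynomial.C (Polynomial.C (∏ t : Fin m, omegaHat n (v' t) (w' t))) *
                (multiDeriv v' f * multiDeriv w' (pderiv j g))) := by ring
    _ = _ := by rw [hc]; ring
lemma moyal_X_mul (i : Fin (2*n)) (f g : WeylPoly n) :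
    moyal n (X i * f) g = X i * moyal n f g
      + MvPolynomial.C (Polynomial.C (1/2 : ℂ) * Polynomial.X) *
          ∑ j : Fin (2*n), MvPolynomial.C (Polynomial.C (omegaHat n i j)) *
            moyal n f (pderiv j g) := by
  have hdeg : (X i * f).totalDegree ≤ f.totalDegree + 1 := by
    refine (totalDegree_mul _ _).trans ?_
    rw [totalDegree_X]
    omega
  rw [moyal_eq (f.totalDegree + 1) hdeg g, Finset.sum_range_succ', mterm_zero,
    Finset.sum_congr rfl
      (fun m (_ : m ∈ Finset.range (f.totalDegree+1)) => mterm_succ_X_mul m i f g),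
    Finset.sum_add_distrib]
  have h1 : X i * moyal n f g
      = (∑ m ∈ Finset.range (f.totalDegree + 1), X i * mterm n (m+1) f g) + X i * (f * g) := by
    rw [moyal_eq (f.totalDegree + 1) (Nat.le_succ _) g, Finset.sum_range_succ', mterm_zero,
      mul_add, Finset.mul_sum]
  have h3 : ∑ m ∈ Finset.range (f.totalDegree+1),
        (MvPolynomial.C (Polynomial.C (1/2:ℂ) * Polynomial.X) *
          ∑ j : Fin (2*n), MvPolynomial.C (Polynomial.C (omegaHat n i j)) *
            mterm n m f (pderiv j g))
      = MvPolynomial.C (Polynomial.C (1/2:ℂ) * Polynomial.X) *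
          ∑ j : Fin (2*n), MvPolynomial.C (Polynomial.C (omegaHat n i j)) *
            moyal n f (pderiv j g) := by
    rw [← Finset.mul_sum]
    congr 1
    rw [Finset.sum_comm]
    refine Finset.sum_congr rfl fun j _ => ?_
    rw [moyal_eq f.totalDegree le_rfl (pderiv j g), Finset.mul_sum]
  rw [h1, h3]
  ring

lemma pderiv_moyal (j : Fin (2*n)) (g h : WeylPoly n) :
    pderiv j (moyal n g h) = moyal n (pderiv j g) h + moyal n g (pderiv j h) := by
  have hterm : ∀ m, pderiv j (mterm n m g h)
      = mterm n m (pderiv j g) h + mterm n m g (pderiv j h) := by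
    intro m
    unfold mterm
    simp only [pderiv_C_mul, map_sum, pderiv_mul, multiDeriv_pderiv, mul_add,
      Finset.sum_add_distrib, Finset.mul_sum, pderiv_C, zero_mul, mul_zero,
      Finset.sum_const_zero, zero_add, add_zero]
  rw [moyal_def, map_sum, Finset.sum_congr rfl (fun m _ => hterm m), Finset.sum_add_distrib]
  congr 1
  exact (moyal_eq g.totalDegree (totalDegree_pderiv_le j g) h).symm

lemma moyal_C_mul_left (c : Polynomial ℂ) (f g : WeylPoly n) :
    moyal n (MvPolynomial.C c * f) g = MvPolynomial.C c * moyal n f g := by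
  calc moyal n (MvPolynomial.C c * f) g = moyal n (c • f) g := by rw [smul_eq_C_mul]
    _ = c • moyal n f g := moyal_smul_left c f g
    _ = MvPolynomial.C c * moyal n f g := smul_eq_C_mul _ _

lemma moyal_assoc (f g h : WeylPoly n) :
    moyal n (moyal n f g) h = moyal n f (moyal n g h) := by
  induction f using MvPolynomial.induction_on generalizing g h with
  | C a =>
      rw [moyal_C_left, moyal_C_left, moyal_C_mul_left]
  | add p q hp hq =>
      rw [moyal_add_left, moyal_add_left, moyal_add_left, hp, hq]
  | mul_X p i hp =>
      rw [mul_comm p (X i), moyal_X_mul i p g, moyal_add_left, moyal_X_mul i (moyal n p g) h,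
        moyal_X_mul i p (moyal n g h)]
      have e1 : moyal n (MvPolynomial.C (Polynomial.C (1/2:ℂ) * Polynomial.X) *
          ∑ j : Fin (2*n), MvPolynomial.C (Polynomial.C (omegaHat n i j)) *
            moyal n p (pderiv j g)) h
          = MvPolynomial.C (Polynomial.C (1/2:ℂ) * Polynomial.X) *
            ∑ j : Fin (2*n), MvPolynomial.C (Polynomial.C (omegaHat n i j)) *
              moyal n p (moyal n (pderiv j g) h) := by
        rw [moyal_C_mul_left, moyal_sum_left]
        congr 1
        refine Finset.sum_congr rfl fun j _ => ?_
        rw [moyal_C_mul_left, hp]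
      rw [e1]
      have e3 : ∑ j : Fin (2*n), MvPolynomial.C (Polynomial.C (omegaHat n i j)) *
            moyal n p (pderiv j (moyal n g h))
          = (∑ j : Fin (2*n), MvPolynomial.C (Polynomial.C (omegaHat n i j)) *
              moyal n p (moyal n (pderiv j g) h))
            + ∑ j : Fin (2*n), MvPolynomial.C (Polynomial.C (omegaHat n i j)) *
              moyal n p (moyal n g (pderiv j h)) := by
        rw [← Finset.sum_add_distrib]
        refine Finset.sum_congr rfl fun j _ => ?_
        rw [pderiv_moyal, moyal_add_right, mul_add]
      rw [e3, hp g h]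
      have e4 : ∑ j : Fin (2*n), MvPolynomial.C (Polynomial.C (omegaHat n i j)) *
            moyal n (moyal n p g) (pderiv j h)
          = ∑ j : Fin (2*n), MvPolynomial.C (Polynomial.C (omegaHat n i j)) *
            moyal n p (moyal n g (pderiv j h)) :=
        Finset.sum_congr rfl fun j _ => by rw [hp]
      rw [e4]
      ring

end MoyalAux

/-- The Moyal product makes
`A = MvPolynomial (Fin (2n)) (Polynomial ℂ)` into an associative unital algebra over
`ℂ[ℏ]`: it is associative, has `1` as a two-sided unit, and is `ℂ[ℏ]`-bilinear.
(This is the polynomial Weyl algebra `W^{pol}_{2n}`.) -/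
theorem moyal_assoc_unital_bilinear (n : ℕ) (hn : 1 ≤ n) :
    (∀ f g h : WeylPoly n, moyal n (moyal n f g) h = moyal n f (moyal n g h))
    ∧ (∀ f : WeylPoly n, moyal n 1 f = f ∧ moyal n f 1 = f)
    ∧ (∀ (c : Polynomial ℂ) (f g : WeylPoly n),
        moyal n (c • f) g = c • moyal n f g ∧ moyal n f (c • g) = c • moyal n f g)
    ∧ (∀ f f' g : WeylPoly n,
        moyal n (f + f') g = moyal n f g + moyal n f' g
        ∧ moyal n g (f + f') = moyal n g f + moyal n g f') := by
  refine ⟨fun f g h => MoyalAux.moyal_assoc f g h, fun f => ⟨?_, ?_⟩,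
    fun c f g => ⟨MoyalAux.moyal_smul_left c f g, MoyalAux.moyal_smul_right c f g⟩,
    fun f f' g => ⟨MoyalAux.moyal_add_left f f' g, MoyalAux.moyal_add_right g f f'⟩⟩
  · rw [show (1 : WeylPoly n) = MvPolynomial.C 1 from (map_one _).symm,
      MoyalAux.moyal_C_left, map_one, one_mul]
  · rw [show (1 : WeylPoly n) = MvPolynomial.C 1 from (map_one _).symm,
      MoyalAux.moyal_C_right, map_one, one_mul]

end
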